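/- Let x^L < 0 < x^U and suppose x_c ∈ [0, x^U] satisfies 1 - tanh²(x_c) = (tanh(x_c) - tanh(x^L))/(x_c - x^L). Define F(x) = tanh(x^L) + ((tanh(x_c) - tanh(x^L))/(x_c - x^L))·(x - x^L) for x < x_c and F(x) = tanh(x) for x ≥ x_c. Then F is concave on [x^L, x^U] and F(x) ≥ tanh(x) for all x ∈ [x^L, x^U]. -/

import Mathlib

open Real Set

private lemma tanh_hasDerivAt' (x : ℝ) : HasDerivAt Real.tanh (1 - Real.tanh x ^ 2) x := by
  have h : HasDerivAt (fun y => Real.sinh y / Real.cosh y)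
      ((Real.cosh x * Real.cosh x - Real.sinh x * Real.sinh x) / Real.cosh x ^ 2) x :=
    (Real.hasDerivAt_sinh x).div (Real.hasDerivAt_cosh x) (Real.cosh_pos x).ne'
  have heq : (fun y => Real.sinh y / Real.cosh y) = Real.tanh := by
    funext y; rw [Real.tanh_eq_sinh_div_cosh]
  rw [heq] at h
  convert h using 1
  have hc : Real.cosh x ≠ 0 := (Real.cosh_pos x).ne'
  rw [Real.tanh_eq_sinh_div_cosh]
  field_simp

private lemma tanh_lt_one' (x : ℝ) : Real.tanh x < 1 := by
  rw [Real.tanh_eq_sinh_div_cosh, div_lt_one (Real.cosh_pos x)]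
  exact Real.sinh_lt_cosh x

private lemma neg_one_lt_tanh' (x : ℝ) : -1 < Real.tanh x := by
  have := tanh_lt_one' (-x)
  rw [Real.tanh_neg] at this
  linarith

private lemma tanh_sq_lt_one' (x : ℝ) : Real.tanh x ^ 2 < 1 := by
  nlinarith [tanh_lt_one' x, neg_one_lt_tanh' x]

private lemma tanh_strictMono' : StrictMono Real.tanh := by
  apply strictMono_of_deriv_pos
  intro x
  rw [(tanh_hasDerivAt' x).deriv]
  linarith [tanh_sq_lt_one' x]

private lemma tanh_continuous' : Continuous Real.tanh :=
  continuous_iff_continuousAt.2 fun x => (tanh_hasDerivAt' x).continuousAt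

theorem tanh_concave_envelope (xL xU xc : ℝ) (h1 : xL < 0) (h2 : 0 < xU)
    (hc : xc ∈ Set.Icc 0 xU)
    (htan : 1 - Real.tanh xc ^ 2 = (Real.tanh xc - Real.tanh xL) / (xc - xL))
    (F : ℝ → ℝ)
    (hF : ∀ x, F x = if x < xc then
        Real.tanh xL + ((Real.tanh xc - Real.tanh xL) / (xc - xL)) * (x - xL)
      else Real.tanh x) :
    ConcaveOn ℝ (Set.Icc xL xU) F ∧ ∀ x ∈ Set.Icc xL xU, Real.tanh x ≤ F x := by
  obtain ⟨hxc0, hxcU⟩ := hc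
  have hcL : xL < xc := lt_of_lt_of_le h1 hxc0
  have hne : xc - xL ≠ 0 := by linarith
  set m : ℝ := 1 - Real.tanh xc ^ 2 with hm
  -- the line in slope-point form at xc
  set L : ℝ → ℝ := fun x => Real.tanh xc + m * (x - xc) with hL
  have hmq : m * (xc - xL) = Real.tanh xc - Real.tanh xL := by
    rw [htan, div_mul_cancel₀ _ hne]
  have hLeq : ∀ x, Real.tanh xL + (Real.tanh xc - Real.tanh xL) / (xc - xL) * (x - xL) = L x := by
    intro x
    rw [← htan]
    show Real.tanh xL + m * (x - xL) = Real.tanh xc + m * (x - xc)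
    linear_combination hmq
  have hF' : ∀ x, F x = if x < xc then L x else Real.tanh x := by
    intro x; rw [hF, hLeq]
  -- m is nonnegative
  have hm0 : 0 < m := by rw [hm]; linarith [tanh_sq_lt_one' xc]
  -- tanh ≤ L on [xL, xc]
  set D : ℝ → ℝ := fun x => L x - Real.tanh x with hD
  have hDderiv : ∀ x, HasDerivAt D (m - (1 - Real.tanh x ^ 2)) x := by
    intro x
    have h1' : HasDerivAt L m x := by
      simpa [hL] using ((hasDerivAt_id x).sub_const xc).const_mul m |>.const_add (Real.tanh xc)
    exact h1'.sub (tanh_hasDerivAt' x)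
  have hDcont : Continuous D :=
    (by continuity : Continuous L).sub tanh_continuous'
  have hDxc : D xc = 0 := by simp [hD, hL]
  have hDxL : D xL = 0 := by
    have : L xL = Real.tanh xL := by
      rw [hL]; simp only
      have : m * (xL - xc) = -(Real.tanh xc - Real.tanh xL) := by
        rw [← hmq]; ring
      linarith [this]
    simp [hD, this]
  -- D is antitone on [0, xc]
  have hanti : AntitoneOn D (Icc 0 xc) := by
    apply antitoneOn_of_deriv_nonpos (convex_Icc 0 xc) hDcont.continuousOn
      (fun x _ => (hDderiv x).differentiableAt.differentiableWithinAt)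
    intro x hx
    rw [interior_Icc] at hx
    rw [(hDderiv x).deriv]
    have h0x : 0 ≤ Real.tanh x := by
      have := tanh_strictMono'.monotone hx.1.le
      simpa [Real.tanh_zero] using this
    have hxxc : Real.tanh x ≤ Real.tanh xc := tanh_strictMono'.monotone hx.2.le
    have : Real.tanh x ^ 2 ≤ Real.tanh xc ^ 2 := by nlinarith
    rw [hm]; linarith
  have hstep1 : ∀ x ∈ Icc 0 xc, 0 ≤ D x := by
    intro x hx
    have := hanti hx (right_mem_Icc.2 hxc0) hx.2
    rw [hDxc] at this
    exact this
  -- D is concave on [xL, 0]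
  have hconcD : ConcaveOn ℝ (Icc xL 0) D := by
    apply AntitoneOn.concaveOn_of_deriv (convex_Icc xL 0) hDcont.continuousOn
      (fun x _ => (hDderiv x).differentiableAt.differentiableWithinAt)
    intro a ha b hb hab
    rw [interior_Icc] at ha hb
    rw [(hDderiv a).deriv, (hDderiv b).deriv]
    have hta : Real.tanh a ≤ Real.tanh b := tanh_strictMono'.monotone hab
    have htb : Real.tanh b ≤ 0 := by
      have := tanh_strictMono'.monotone hb.2.le
      simpa [Real.tanh_zero] using this
    nlinarith
  have hstep2 : ∀ x ∈ Icc xL 0, 0 ≤ D x := by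
    intro x hx
    have := hconcD.min_le_of_mem_Icc (left_mem_Icc.2 h1.le) (right_mem_Icc.2 h1.le) hx
    have hD0 : 0 ≤ D 0 := hstep1 0 (left_mem_Icc.2 hxc0)
    rw [hDxL] at this
    calc (0:ℝ) = min 0 0 := by simp
    _ ≤ min (0:ℝ) (D 0) := min_le_min le_rfl hD0
    _ ≤ D x := this
  have hkey : ∀ x ∈ Icc xL xc, Real.tanh x ≤ L x := by
    intro x hx
    rcases le_or_gt x 0 with h | h
    · have := hstep2 x ⟨hx.1, h⟩; simp only [hD] at this; linarith
    · have := hstep1 x ⟨h.le, hx.2⟩; simp only [hD] at this; linarith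
  -- second part of the conclusion
  have hover : ∀ x ∈ Set.Icc xL xU, Real.tanh x ≤ F x := by
    intro x hx
    rw [hF' x]
    split_ifs with h
    · exact hkey x ⟨hx.1, h.le⟩
    · exact le_rfl
  refine ⟨?_, hover⟩
  -- continuity of F
  have hLxc : L xc = Real.tanh xc := by simp [hL]
  have hFeq : F = fun x => if xc ≤ x then Real.tanh x else L x := by
    funext x
    rw [hF' x]
    rcases lt_or_ge x xc with h | h
    · rw [if_pos h, if_neg (not_le.2 h)]
    · rw [if_neg (not_lt.2 h), if_pos h]
  have hFcont : Continuous F := by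
    rw [hFeq]
    exact Continuous.if_le tanh_continuous' (by continuity) continuous_const continuous_id
      (fun x hx => by rw [← hx, hLxc])
  -- derivative of F
  set g : ℝ → ℝ := fun x => if x ≤ xc then m else 1 - Real.tanh x ^ 2 with hg
  have hFderiv : ∀ x, HasDerivAt F (g x) x := by
    intro x
    have hLd : ∀ y, HasDerivAt L m y := fun y => by
      simpa [hL] using ((hasDerivAt_id y).sub_const xc).const_mul m |>.const_add (Real.tanh xc)
    rcases lt_trichotomy x xc with h | h | h
    · have : g x = m := if_pos h.le
      rw [this]
      apply (hLd x).congr_of_eventuallyEq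
      filter_upwards [Iio_mem_nhds h] with y hy
      rw [hF' y, if_pos (mem_Iio.1 hy)]
    · rw [h]
      have hgm : g x = m := if_pos h.le
      rw [h] at hgm
      rw [hgm]
      have hFL : ∀ y, y ≤ xc → F y = L y := by
        intro y hy
        rcases lt_or_eq_of_le hy with h' | h'
        · rw [hF' y, if_pos h']
        · rw [h', hF' xc, if_neg (lt_irrefl xc), hLxc]
      have hleft : HasDerivWithinAt F m (Iic xc) xc := by
        apply ((hLd xc).hasDerivWithinAt).congr
        · intro y hy
          exact hFL y (mem_Iic.1 hy)
        · exact hFL xc le_rfl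
      have hright : HasDerivWithinAt F m (Ici xc) xc := by
        have htd : HasDerivAt Real.tanh m xc := by rw [hm]; exact tanh_hasDerivAt' xc
        apply htd.hasDerivWithinAt.congr
        · intro y hy
          rw [hF' y, if_neg (not_lt.2 (mem_Ici.1 hy))]
        · rw [hF' xc, if_neg (lt_irrefl xc)]
      have hu := hleft.union hright
      rw [Iic_union_Ici] at hu
      exact hasDerivWithinAt_univ.1 hu
    · have : g x = 1 - Real.tanh x ^ 2 := if_neg (not_le.2 h)
      rw [this]
      apply (tanh_hasDerivAt' x).congr_of_eventuallyEq
      filter_upwards [Ioi_mem_nhds h] with y hy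
      rw [hF' y, if_neg (not_lt.2 (le_of_lt (mem_Ioi.1 hy)))]
  apply AntitoneOn.concaveOn_of_deriv (convex_Icc xL xU) hFcont.continuousOn
    (fun x _ => (hFderiv x).differentiableAt.differentiableWithinAt)
  intro a ha b hb hab
  rw [interior_Icc] at ha hb
  rw [(hFderiv a).deriv, (hFderiv b).deriv]
  simp only [hg]
  split_ifs with h1' h2' h2'
  · exact le_rfl
  · exact absurd (hab.trans h1') h2'
  · -- a ≤ xc < b
    have h0c : 0 ≤ Real.tanh xc := by
      have := tanh_strictMono'.monotone hxc0
      simpa [Real.tanh_zero] using this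
    have hcb : Real.tanh xc ≤ Real.tanh b := tanh_strictMono'.monotone (not_le.1 h1').le
    rw [hm]
    have := pow_le_pow_left₀ h0c hcb 2
    linarith
  · -- xc < a ≤ b
    have h0a : 0 ≤ Real.tanh a := by
      have h0 : (0:ℝ) ≤ a := hxc0.trans (not_le.1 h2').le
      have := tanh_strictMono'.monotone h0
      simpa [Real.tanh_zero] using this
    have hab2 : Real.tanh a ≤ Real.tanh b := tanh_strictMono'.monotone hab
    have := pow_le_pow_left₀ h0a hab2 2
    linarith
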